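/- Let u : ℝ → ℝ be continuously differentiable with u(x) → 0 as x → +∞, and let k ∈ ℂ with Im k ≥ 0. Suppose f : ℝ → ℂ is twice continuously differentiable and satisfies −f''(x) + u(x)f(x) = k²f(x) on ℝ, that e^{−ikx}f(x) → 1 and e^{−ikx}f'(x) → ik as x → +∞, and that y ↦ u'(y)f(y)² is Lebesgue integrable on [x,∞) for every x ∈ ℝ. Then the squared eigenfunction F = f² is an eigenfunction of the recursion operator L₊ with eigenvalue k²: for every x ∈ ℝ, −(1/4)F''(x) + u(x)F(x) + (1/2)∫_x^{+∞} u'(y)F(y) dy = k² F(x). -/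

import Mathlib

open MeasureTheory Filter

/-- If `u` is `C¹` with `u → 0` at `+∞`, `Im k ≥ 0`, and `f` is a `C²`
solution of `−f'' + u f = k² f` with the Jost-type asymptotics `e^{−ikx} f → 1` and
`e^{−ikx} f' → ik` at `+∞`, and `u' f²` is integrable on `[x,∞)` for each `x`, then the
squared eigenfunction `F = f²` satisfies `L₊F = k²F`, i.e.
`−(1/4)F'' + uF + (1/2)∫_x^∞ u'F = k²F`. -/
theorem squared_eigenfunction_recursion_operator
    (u : ℝ → ℝ) (hu : ContDiff ℝ 1 u) (hu0 : Tendsto u atTop (nhds 0))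
    (k : ℂ) (hk : 0 ≤ k.im)
    (f : ℝ → ℂ) (hf : ContDiff ℝ 2 f)
    (heq : ∀ x : ℝ, -(deriv (deriv f) x) + ((u x : ℝ) : ℂ) * f x = k ^ 2 * f x)
    (hasym : Tendsto (fun x : ℝ => Complex.exp (-Complex.I * k * (x : ℂ)) * f x) atTop (nhds 1))
    (hasym' : Tendsto (fun x : ℝ => Complex.exp (-Complex.I * k * (x : ℂ)) * deriv f x)
      atTop (nhds (Complex.I * k)))
    (hint : ∀ x : ℝ, IntegrableOn (fun y : ℝ => ((deriv u y : ℝ) : ℂ) * (f y) ^ 2) (Set.Ici x)) :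
    ∀ x : ℝ,
      -(1 / 4 : ℂ) * deriv (deriv (fun y : ℝ => (f y) ^ 2)) x
        + ((u x : ℝ) : ℂ) * (f x) ^ 2
        + (1 / 2 : ℂ) * ∫ y in Set.Ici x, ((deriv u y : ℝ) : ℂ) * (f y) ^ 2
      = k ^ 2 * (f x) ^ 2 := by
  intro x
  -- basic differentiability facts
  have hfd : Differentiable ℝ f := hf.differentiable (by norm_num)
  have h2 : ContDiff ℝ (1 + 1) f := by
    have : ((1 : WithTop ℕ∞) + 1) = 2 := by norm_num
    rw [this]; exact hf
  have hf1 : ContDiff ℝ 1 (deriv f) := (contDiff_succ_iff_deriv.mp h2).2.2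
  have hfd1 : Differentiable ℝ (deriv f) := hf1.differentiable one_ne_zero
  have hud : Differentiable ℝ u := hu.differentiable one_ne_zero
  have hsq : ∀ (g : ℝ → ℂ) (g' : ℂ) (y : ℝ), HasDerivAt g g' y →
      HasDerivAt (fun t => (g t) ^ 2) (2 * g y * g') y := by
    intro g g' y h
    have h2 : HasDerivAt (fun t => g t * g t) (g' * g y + g y * g') y := h.mul h
    have hfe : (fun t => g t * g t) = fun t => (g t) ^ 2 := by funext t; ring
    rw [hfe] at h2
    convert h2 using 1
    ring
  set G : ℝ → ℂ := fun y => (deriv f y) ^ 2 + (k ^ 2 - ((u y : ℝ) : ℂ)) * (f y) ^ 2 with hGdef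
  -- derivative of G
  have hG : ∀ y : ℝ, HasDerivAt G (-(((deriv u y : ℝ) : ℂ) * (f y) ^ 2)) y := by
    intro y
    have h1 : HasDerivAt f (deriv f y) y := (hfd y).hasDerivAt
    have hD : HasDerivAt (deriv f) (deriv (deriv f) y) y := (hfd1 y).hasDerivAt
    have huc : HasDerivAt (fun t : ℝ => ((u t : ℝ) : ℂ)) ((deriv u y : ℝ) : ℂ) y :=
      ((hud y).hasDerivAt).ofReal_comp
    have hA : HasDerivAt (fun t => (deriv f t) ^ 2)
        (2 * deriv f y * deriv (deriv f) y) y := hsq _ _ _ hD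
    have hB : HasDerivAt (fun t : ℝ => k ^ 2 - ((u t : ℝ) : ℂ))
        (0 - ((deriv u y : ℝ) : ℂ)) y := (hasDerivAt_const y (k ^ 2)).sub huc
    have hC : HasDerivAt (fun t => (f t) ^ 2) (2 * f y * deriv f y) y := hsq _ _ _ h1
    have htot : HasDerivAt (fun t => (deriv f t) ^ 2 + (k ^ 2 - ((u t : ℝ) : ℂ)) * (f t) ^ 2)
        (2 * deriv f y * deriv (deriv f) y + ((0 - ((deriv u y : ℝ) : ℂ)) * (f y) ^ 2
          + (k ^ 2 - ((u y : ℝ) : ℂ)) * (2 * f y * deriv f y))) y := hA.add (hB.mul hC)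
    convert htot using 1
    linear_combination (2 * deriv f y) * heq y
  -- G tends to 0 at +∞
  set A : ℝ → ℂ := fun y : ℝ => Complex.exp (-Complex.I * k * (y : ℂ)) * f y with hAdef
  set B : ℝ → ℂ := fun y : ℝ => Complex.exp (-Complex.I * k * (y : ℂ)) * deriv f y with hBdef
  set H : ℝ → ℂ := fun y =>
    (B y - Complex.I * k * A y) * (B y + Complex.I * k * A y) - ((u y : ℝ) : ℂ) * (A y) ^ 2
    with hHdef
  have huC : Tendsto (fun y : ℝ => ((u y : ℝ) : ℂ)) atTop (nhds 0) := by
    have := (Complex.continuous_ofReal.tendsto 0).comp hu0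
    simpa [Function.comp_def] using this
  have hH : Tendsto H atTop (nhds 0) := by
    have h := ((hasym'.sub (hasym.const_mul (Complex.I * k))).mul
        (hasym'.add (hasym.const_mul (Complex.I * k)))).sub (huC.mul (hasym.pow 2))
    have hval : ((Complex.I * k - Complex.I * k * 1) * (Complex.I * k + Complex.I * k * 1)
        - 0 * 1 ^ 2 : ℂ) = 0 := by ring
    rw [hval] at h
    exact h
  have geq : ∀ y : ℝ, G y = Complex.exp (Complex.I * k * (y : ℂ)) ^ 2 * H y := by
    intro y
    have e1 : Complex.exp (Complex.I * k * (y : ℂ)) * Complex.exp (-Complex.I * k * (y : ℂ))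
        = 1 := by
      rw [← Complex.exp_add]
      have : Complex.I * k * (y : ℂ) + -Complex.I * k * (y : ℂ) = 0 := by ring
      rw [this, Complex.exp_zero]
    have hfy : f y = Complex.exp (Complex.I * k * (y : ℂ)) * A y := by
      rw [hAdef]; simp only [← mul_assoc, e1, one_mul]
    have hfy' : deriv f y = Complex.exp (Complex.I * k * (y : ℂ)) * B y := by
      rw [hBdef]; simp only [← mul_assoc, e1, one_mul]
    rw [hGdef, hHdef]
    simp only
    rw [hfy, hfy']
    linear_combination (Complex.exp (Complex.I * k * (y : ℂ)) ^ 2 * k ^ 2 * A y ^ 2)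
      * Complex.I_sq
  have hGlim : Tendsto G atTop (nhds 0) := by
    have hbound : ∀ᶠ y in atTop, ‖G y‖ ≤ ‖H y‖ := by
      filter_upwards [eventually_ge_atTop (0 : ℝ)] with y hy
      rw [geq y, norm_mul, norm_pow]
      have hb : ‖Complex.exp (Complex.I * k * (y : ℂ))‖ ≤ 1 := by
        rw [Complex.norm_exp]
        have hre : (Complex.I * k * (y : ℂ)).re = -(k.im * y) := by
          simp [Complex.mul_re, Complex.mul_im]
        rw [hre]
        calc Real.exp (-(k.im * y)) ≤ Real.exp 0 := by
              apply Real.exp_le_exp.mpr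
              simp [mul_nonneg hk hy]
          _ = 1 := Real.exp_zero
      calc ‖Complex.exp (Complex.I * k * (y : ℂ))‖ ^ 2 * ‖H y‖
          ≤ 1 ^ 2 * ‖H y‖ := by
            gcongr
        _ = ‖H y‖ := by ring
    exact squeeze_zero_norm' hbound (by simpa using hH.norm)
  -- the integral equals G x
  have hGcont : Continuous G := by
    rw [continuous_iff_continuousAt]
    exact fun y => (hG y).continuousAt
  have hint' : IntegrableOn (fun y : ℝ => -(((deriv u y : ℝ) : ℂ) * (f y) ^ 2)) (Set.Ioi x) :=
    ((hint x).mono_set Set.Ioi_subset_Ici_self).neg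
  have hI0 := integral_Ioi_of_hasDerivAt_of_tendsto
      (hGcont.continuousWithinAt) (fun y _ => hG y) hint' hGlim
  have hint2 : (∫ y in Set.Ici x, ((deriv u y : ℝ) : ℂ) * (f y) ^ 2) = G x := by
    rw [integral_Ici_eq_integral_Ioi]
    rw [integral_neg] at hI0
    have h3 : -(∫ y in Set.Ioi x, ((deriv u y : ℝ) : ℂ) * (f y) ^ 2) = -(G x) := by
      rw [hI0]; ring
    exact neg_inj.mp h3
  -- second derivative of f²
  have hder1 : deriv (fun y : ℝ => (f y) ^ 2) = fun y => 2 * f y * deriv f y := by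
    funext y
    exact (hsq _ _ _ ((hfd y).hasDerivAt)).deriv
  have hder2 : deriv (deriv (fun y : ℝ => (f y) ^ 2)) x
      = 2 * deriv f x * deriv f x + 2 * f x * deriv (deriv f) x := by
    rw [hder1]
    have h1 : HasDerivAt (fun y : ℝ => 2 * f y) (2 * deriv f x) x :=
      ((hfd x).hasDerivAt).const_mul 2
    have h2' : HasDerivAt (deriv f) (deriv (deriv f) x) x := (hfd1 x).hasDerivAt
    exact (h1.mul h2').deriv
  rw [hder2, hint2, hGdef]
  simp only
  linear_combination (f x / 2) * heq x
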